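/- In the setting of the induced connection D_ψ on the extension of scalars N ⊗_B A: the curvature satisfies R_{D_ψ}(n ⊗ 1_A) = (id ⊗_B ψ)(R_D(n)) for all n ∈ N; i.e. D_ψ²(n ⊗ 1_A) = (id ⊗_B ψ)(D²(n)), where D² is the curvature of D on N ⊗_B Ω_•(B) and id ⊗_B ψ : N ⊗_B Ω_•(B) → N ⊗_B Ω_•(A) applies Ω_•(ψ) to the form factor. -/
import Mathlib


/-!
STATEMENT 14: For the induced connection D_ψ on the extension of scalars
N ⊗_B A along an algebra map ψ : B → A (with Ω• a DGA on top of Alg), the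
curvature satisfies D_ψ²(n ⊗ 1_A) = (id ⊗_B ψ)(D²(n)) for all n ∈ N.

Encoding: ΩB, ΩA are the total DGAs of B and A, with K-linear differentials
dB, dA and the induced algebra map ψΩ = Ω•(ψ) commuting with the
differentials.  EB plays the role of N ⊗_B Ω•(B): a right ΩB-module
generated over ΩB by ιB(N), with DB : EB → EB the Leibniz extension of the
connection D on N.  EA plays the role of N ⊗_B Ω•(A), a right ΩA-module, and
idψ : EB → EA is the map id ⊗_B ψ, semilinear over ψΩ.  DA is the induced
connection D_ψ (extended by Leibniz), characterized by DA(n ⊗ 1_A) =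
(id ⊗_B ψ)(D n) and the Leibniz rule on the degree-zero generators.  The
conclusion is DA²(n ⊗ 1) = idψ(DB²(n)).
-/

open MulOpposite

theorem curvature_of_induced_connection
    (K : Type*) [Field K]
    (ΩB ΩA : Type*) [Ring ΩB] [Ring ΩA] [Algebra K ΩB] [Algebra K ΩA]
    (ψΩ : ΩB →ₐ[K] ΩA)
    (dB : ΩB →ₗ[K] ΩB) (dA : ΩA →ₗ[K] ΩA)
    (hchain : ∀ ω : ΩB, dA (ψΩ ω) = ψΩ (dB ω))
    -- N and EB = N ⊗_B Ω•(B)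
    (N : Type*) [AddCommGroup N] [Module K N]
    (EB : Type*) [AddCommGroup EB] [Module K EB] [Module ΩBᵐᵒᵖ EB]
    [SMulCommClass K ΩBᵐᵒᵖ EB]
    (ιB : N →ₗ[K] EB)
    (hspan : ∀ x : EB,
      x ∈ Submodule.span K {y : EB | ∃ (n : N) (ω : ΩB), y = op ω • ιB n})
    -- the extended connection DB on EB (Leibniz on degree-zero generators)
    (DB : EB →ₗ[K] EB)
    (hDB_leib : ∀ (n : N) (ω : ΩB),
      DB (op ω • ιB n) = op ω • DB (ιB n) + op (dB ω) • ιB n)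
    -- EA = N ⊗_B Ω•(A) and the map idψ = id ⊗_B ψ, semilinear over ψΩ
    (EA : Type*) [AddCommGroup EA] [Module K EA] [Module ΩAᵐᵒᵖ EA]
    (idψ : EB →ₗ[K] EA)
    (hsemi : ∀ (ω : ΩB) (x : EB), idψ (op ω • x) = op (ψΩ ω) • idψ x)
    -- the induced connection DA = D_ψ on EA
    (DA : EA →ₗ[K] EA)
    (hDA0 : ∀ n : N, DA (idψ (ιB n)) = idψ (DB (ιB n)))
    (hDA_leib : ∀ (n : N) (ω : ΩA),
      DA (op ω • idψ (ιB n)) = op ω • DA (idψ (ιB n)) + op (dA ω) • idψ (ιB n)) :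
    ∀ n : N, DA (DA (idψ (ιB n))) = idψ (DB (DB (ιB n))) := by
  have key : ∀ x : EB, DA (idψ x) = idψ (DB x) := by
    intro x
    refine Submodule.span_induction ?_ ?_ ?_ ?_ (hspan x)
    · rintro y ⟨n, ω, rfl⟩
      rw [hsemi, hDA_leib, hDA0, hchain, ← hsemi, ← hsemi, ← map_add, hDB_leib]
    · simp
    · intro a b _ _ ha hb
      simp [map_add, ha, hb]
    · intro c a _ ha
      simp [map_smul, ha]
  intro n
  rw [hDA0, key]
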